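/- Let f : X → (V → Option (Fin p)) be any fiid partial labelling of the r-regular tree. Then for any two adjacent vertices u, v and any pair t = (d, c) with 1 ≤ d ≤ r and c ≤ p: μ({x : v remains in f(x), τ(x, v) = (d, c), and u remains in f(x)}) = (d / r) · μ({x : v remains in f(x) and τ(x, v) = (d, c)}). In particular, if μ({x : both u and v remain in f(x)}) > 0, then the conditional probability that τ(x, v) = (d, c) given that both u and v remain equals d · μ({x : v remains and τ(x,v) = (d,c)}) divided by Σ_{(d',c')} d' · μ({x : v remains and τ(x,v) = (d',c')}), the sum ranging over all pairs (d', c') with d' ≤ r and c' ≤ p. -/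

import Mathlib

open MeasureTheory

/-- A vertex `v` *remains* in a partial labelling `ℓ` if it is uncolored. -/
def remains {V : Type} {p : ℕ} (ℓ : V → Option (Fin p)) (v : V) : Prop :=
  ℓ v = none

/-- The *type* of a vertex `v` in a partial labelling `ℓ` of a graph `G`: the pair
`(d, c)` where `d` is the number of uncolored neighbours of `v` and `c` is the number of
colors not seen by `v`. -/
noncomputable def typeOf {V : Type} {p : ℕ} (G : SimpleGraph V)
    (ℓ : V → Option (Fin p)) (v : V) : ℕ × ℕ :=
  ({u ∈ G.neighborSet v | ℓ u = none}.ncard,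
   {i : Fin p | ∀ u ∈ G.neighborSet v, ℓ u ≠ some i}.ncard)

/-- `Option (Fin p)` is a countable discrete space; give it the discrete σ-algebra. -/
instance {p : ℕ} : MeasurableSpace (Option (Fin p)) := ⊤

namespace StepAux

open SimpleGraph

variable {V : Type} {G : SimpleGraph V}

lemma adj_dist_ne (hconn : G.Connected) (hacyc : G.IsAcyclic) {v x y : V} (hxy : G.Adj x y) :
    G.dist v x ≠ G.dist v y := by
  classical
  intro h
  by_cases h0 : G.dist v x = 0
  · have hx : v = x := hconn.dist_eq_zero_iff.mp h0
    have hy : v = y := hconn.dist_eq_zero_iff.mp (h ▸ h0)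
    exact hxy.ne (hx ▸ hy ▸ rfl)
  · obtain ⟨P, hP, hPlen⟩ := (hconn.preconnected v x).exists_path_of_dist
    obtain ⟨Q, hQ, hQlen⟩ := (hconn.preconnected v y).exists_path_of_dist
    by_cases hy : y ∈ P.support
    · have h1 := P.length_takeUntil_le hy
      have h2 : G.dist v y ≤ (P.takeUntil y hy).length := SimpleGraph.dist_le _
      have h3 : (P.takeUntil y hy).length = P.length := by omega
      have h4 := P.take_spec hy
      have h5 : (P.takeUntil y hy).length + (P.dropUntil y hy).length = P.length := by
        rw [← SimpleGraph.Walk.length_append, h4]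
      have h6 : (P.dropUntil y hy).length = 0 := by omega
      exact hxy.ne' (SimpleGraph.Walk.eq_of_length_eq_zero h6)
    · have hPc : (P.concat hxy).IsPath := by
        rw [SimpleGraph.Walk.isPath_def, SimpleGraph.Walk.support_concat]
        simp only [List.concat_eq_append, List.nodup_append, List.nodup_cons, List.not_mem_nil,
          not_false_iff, List.nodup_nil, and_true, List.disjoint_singleton]
        exact ⟨hP.support_nodup, by simpa using (fun a ha (hay : a = y) => hy (hay ▸ ha) : ∀ a ∈ P.support, ¬a = y)⟩
      have huniq := hacyc.path_unique ⟨P.concat hxy, hPc⟩ ⟨Q, hQ⟩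
      have : (P.concat hxy).length = Q.length := by
        rw [Subtype.ext_iff] at huniq
        exact congrArg SimpleGraph.Walk.length huniq
      rw [SimpleGraph.Walk.length_concat] at this
      omega

lemma adj_dist (hconn : G.Connected) (hacyc : G.IsAcyclic) {v x y : V} (hxy : G.Adj x y) :
    G.dist v y = G.dist v x + 1 ∨ G.dist v x = G.dist v y + 1 := by
  have h1 : G.dist v y ≤ G.dist v x + 1 := by
    have := hconn.dist_triangle (u := v) (v := x) (w := y)
    rwa [SimpleGraph.dist_eq_one_iff_adj.mpr hxy] at this
  have h2 : G.dist v x ≤ G.dist v y + 1 := by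
    have := hconn.dist_triangle (u := v) (v := y) (w := x)
    rwa [SimpleGraph.dist_eq_one_iff_adj.mpr hxy.symm] at this
  have h3 := adj_dist_ne hconn hacyc (v := v) hxy
  omega

lemma exists_parent (hconn : G.Connected) (hacyc : G.IsAcyclic) {v x : V} (hx : x ≠ v) :
    ∃! y, G.Adj x y ∧ G.dist v y + 1 = G.dist v x := by
  classical
  have hpos : 0 < G.dist v x := hconn.pos_dist_of_ne (Ne.symm hx)
  obtain ⟨P, hP, hPlen⟩ := (hconn.preconnected v x).exists_path_of_dist
  have hnn : ¬ P.reverse.Nil := by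
    rw [SimpleGraph.Walk.not_nil_iff_lt_length, SimpleGraph.Walk.length_reverse]
    omega
  refine ⟨P.reverse.getVert 1, ⟨(show G.Adj x (P.reverse.getVert 1) from SimpleGraph.Walk.adj_snd hnn), ?_⟩, ?_⟩
  · have h1 : G.dist v (P.reverse.getVert 1) ≤ P.reverse.tail.length := by
      rw [SimpleGraph.dist_comm]
      exact SimpleGraph.dist_le _
    have h2 : P.reverse.tail.length + 1 = P.reverse.length :=
      SimpleGraph.Walk.length_tail_add_one hnn
    rw [SimpleGraph.Walk.length_reverse] at h2
    have h3 := adj_dist hconn hacyc (v := v) ((show G.Adj x (P.reverse.getVert 1) from SimpleGraph.Walk.adj_snd hnn))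
    omega
  · -- uniqueness
    -- first show any y with the property is determined
    have key : ∀ y₁ y₂ : V, (G.Adj x y₁ ∧ G.dist v y₁ + 1 = G.dist v x) →
        (G.Adj x y₂ ∧ G.dist v y₂ + 1 = G.dist v x) → y₁ = y₂ := by
      intro y₁ y₂ ⟨ha₁, hd₁⟩ ⟨ha₂, hd₂⟩
      obtain ⟨Q₁, hQ₁, hQ₁len⟩ := (hconn.preconnected v y₁).exists_path_of_dist
      obtain ⟨Q₂, hQ₂, hQ₂len⟩ := (hconn.preconnected v y₂).exists_path_of_dist
      have hx₁ : x ∉ Q₁.support := fun hmem => by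
        have := SimpleGraph.dist_le (Q₁.takeUntil x hmem)
        have := Q₁.length_takeUntil_le hmem
        omega
      have hx₂ : x ∉ Q₂.support := fun hmem => by
        have := SimpleGraph.dist_le (Q₂.takeUntil x hmem)
        have := Q₂.length_takeUntil_le hmem
        omega
      have hR₁ : (Q₁.concat ha₁.symm).IsPath := by
        rw [SimpleGraph.Walk.isPath_def, SimpleGraph.Walk.support_concat]
        simp only [List.concat_eq_append, List.nodup_append, List.nodup_cons, List.not_mem_nil,
          not_false_iff, List.nodup_nil, and_true, List.disjoint_singleton]
        exact ⟨hQ₁.support_nodup, by simpa using (fun a ha (hay : a = x) => hx₁ (hay ▸ ha) : ∀ a ∈ Q₁.support, ¬a = x)⟩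
      have hR₂ : (Q₂.concat ha₂.symm).IsPath := by
        rw [SimpleGraph.Walk.isPath_def, SimpleGraph.Walk.support_concat]
        simp only [List.concat_eq_append, List.nodup_append, List.nodup_cons, List.not_mem_nil,
          not_false_iff, List.nodup_nil, and_true, List.disjoint_singleton]
        exact ⟨hQ₂.support_nodup, by simpa using (fun a ha (hay : a = x) => hx₂ (hay ▸ ha) : ∀ a ∈ Q₂.support, ¬a = x)⟩
      have huniq := hacyc.path_unique ⟨Q₁.concat ha₁.symm, hR₁⟩ ⟨Q₂.concat ha₂.symm, hR₂⟩
      rw [Subtype.ext_iff] at huniq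
      obtain ⟨hv, -⟩ := SimpleGraph.Walk.concat_inj huniq
      exact hv
    intro y hy
    exact key y _ hy ⟨(show G.Adj x (P.reverse.getVert 1) from SimpleGraph.Walk.adj_snd hnn), by
      have h1 : G.dist v (P.reverse.getVert 1) ≤ P.reverse.tail.length := by
        rw [SimpleGraph.dist_comm]; exact SimpleGraph.dist_le _
      have h2 : P.reverse.tail.length + 1 = P.reverse.length :=
        SimpleGraph.Walk.length_tail_add_one hnn
      rw [SimpleGraph.Walk.length_reverse] at h2
      have h3 := adj_dist hconn hacyc (v := v) ((show G.Adj x (P.reverse.getVert 1) from SimpleGraph.Walk.adj_snd hnn))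
      omega⟩


variable (G) in
/-- children of x relative to root v -/
def children (v x : V) : Set V := {y | G.Adj x y ∧ G.dist v y = G.dist v x + 1}

open Classical in
noncomputable def parent (hconn : G.Connected) (hacyc : G.IsAcyclic) (v x : V) : V :=
  if h : x = v then v else (exists_parent hconn hacyc h).exists.choose

variable (hconn : G.Connected) (hacyc : G.IsAcyclic)

lemma parent_spec {v x : V} (hx : x ≠ v) :
    G.Adj x (parent hconn hacyc v x) ∧ G.dist v (parent hconn hacyc v x) + 1 = G.dist v x := by
  classical
  rw [parent, dif_neg hx]
  exact (exists_parent hconn hacyc hx).exists.choose_spec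

lemma parent_unique {v x y : V} (hx : x ≠ v) (h : G.Adj x y ∧ G.dist v y + 1 = G.dist v x) :
    y = parent hconn hacyc v x := by
  obtain ⟨z, hz, huniq⟩ := exists_parent hconn hacyc hx
  rw [huniq y h, huniq _ (parent_spec hconn hacyc hx)]

lemma children_v (v : V) : children G v v = G.neighborSet v := by
  ext y
  simp only [children, Set.mem_setOf_eq, mem_neighborSet, SimpleGraph.dist_self]
  exact ⟨fun h => h.1, fun h => ⟨h, by rw [SimpleGraph.dist_eq_one_iff_adj]; exact h⟩⟩

lemma mem_children_parent {v x : V} (hx : x ≠ v) :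
    x ∈ children G v (parent hconn hacyc v x) := by
  obtain ⟨h1, h2⟩ := parent_spec hconn hacyc hx
  exact ⟨h1.symm, by omega⟩

lemma ne_root_of_mem_children {v z y : V} (hy : y ∈ children G v z) : y ≠ v := by
  intro h
  have := hy.2
  rw [h, SimpleGraph.dist_self] at this
  omega

lemma parent_of_mem_children {v z y : V} (hy : y ∈ children G v z) :
    parent hconn hacyc v y = z :=
  (parent_unique hconn hacyc (ne_root_of_mem_children hy) ⟨hy.1.symm, hy.2.symm⟩).symm

lemma dist_parent_lt {v x : V} (hx : x ≠ v) :
    G.dist v (parent hconn hacyc v x) < G.dist v x := by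
  have := (parent_spec hconn hacyc hx).2
  omega

variable {r : ℕ}

lemma neighborSet_finite (hr : 3 ≤ r) (hreg : ∀ x : V, (G.neighborSet x).ncard = r) (x : V) : (G.neighborSet x).Finite := by
  by_contra h
  have := Set.Infinite.ncard (s := G.neighborSet x) h
  rw [hreg x] at this
  omega

lemma children_finite (hr : 3 ≤ r) (hreg : ∀ x : V, (G.neighborSet x).ncard = r) (v x : V) : (children G v x).Finite :=
  Set.Finite.subset (neighborSet_finite hr hreg x) (fun y hy => hy.1)

lemma neighborSet_eq_insert {v x : V} (hx : x ≠ v) :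
    G.neighborSet x = insert (parent hconn hacyc v x) (children G v x) := by
  ext y
  simp only [mem_neighborSet, Set.mem_insert_iff]
  constructor
  · intro hadj
    rcases adj_dist hconn hacyc (v := v) hadj with h | h
    · right; exact ⟨hadj, h⟩
    · left; exact parent_unique hconn hacyc hx ⟨hadj, h.symm⟩
  · rintro (rfl | hy)
    · exact (parent_spec hconn hacyc hx).1
    · exact hy.1

lemma parent_not_mem_children {v x : V} (hx : x ≠ v) :
    parent hconn hacyc v x ∉ children G v x := by
  intro h
  have h1 := (parent_spec hconn hacyc hx).2
  have h2 := h.2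
  omega

lemma ncard_children (hconn : G.Connected) (hacyc : G.IsAcyclic) (hr : 3 ≤ r) (hreg : ∀ x : V, (G.neighborSet x).ncard = r) {v x : V} (hx : x ≠ v) : (children G v x).ncard = r - 1 := by
  have h1 := hreg x
  rw [neighborSet_eq_insert hconn hacyc hx,
    Set.ncard_insert_of_notMem (parent_not_mem_children hconn hacyc hx)
      (children_finite hr hreg v x)] at h1
  omega

lemma ncard_children_v (hreg : ∀ x : V, (G.neighborSet x).ncard = r) (v : V) : (children G v v).ncard = r := by
  rw [children_v, hreg]


variable (G) in
def EnumProp (v : V) (r : ℕ) (y : V) (q : (ℕ → V) × (V → ℕ)) : Prop :=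
  y ≠ v → ((∀ i < r - 1, q.1 i ∈ children G v y) ∧
    (∀ x ∈ children G v y, q.2 x < r - 1 ∧ q.1 (q.2 x) = x) ∧
    (∀ i < r - 1, q.2 (q.1 i) = i))

lemma exists_enum (hconn : G.Connected) (hacyc : G.IsAcyclic) {r : ℕ} (hr : 3 ≤ r)
    (hreg : ∀ x : V, (G.neighborSet x).ncard = r) (v y : V) :
    ∃ q, EnumProp G v r y q := by
  classical
  by_cases hy : y = v
  · exact ⟨(fun _ => v, fun _ => 0), fun h => absurd hy h⟩
  · have hfin := children_finite hr hreg v y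
    have hcard : hfin.toFinset.card = r - 1 := by
      rw [← Set.ncard_eq_toFinset_card _ hfin]
      exact ncard_children hconn hacyc hr hreg hy
    have e : ↥hfin.toFinset ≃ Fin (r - 1) :=
      Fintype.equivFinOfCardEq (by rw [Fintype.card_coe, hcard])
    refine ⟨(fun i => if h : i < r - 1 then ↑(e.symm ⟨i, h⟩) else v,
      fun x => if h : x ∈ hfin.toFinset then (e ⟨x, h⟩ : ℕ) else 0), fun _ => ⟨?_, ?_, ?_⟩⟩
    · intro i hi
      simp only [dif_pos hi]
      exact hfin.mem_toFinset.mp (e.symm ⟨i, hi⟩).2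
    · intro x hx
      have hm : x ∈ hfin.toFinset := hfin.mem_toFinset.mpr hx
      simp only [dif_pos hm]
      refine ⟨(e ⟨x, hm⟩).isLt, ?_⟩
      rw [dif_pos (e ⟨x, hm⟩).isLt]
      have : (⟨(e ⟨x, hm⟩ : ℕ), (e ⟨x, hm⟩).isLt⟩ : Fin (r - 1)) = e ⟨x, hm⟩ := rfl
      rw [this, Equiv.symm_apply_apply]
    · intro i hi
      simp only [dif_pos hi]
      have hm : ↑(e.symm ⟨i, hi⟩) ∈ hfin.toFinset := (e.symm ⟨i, hi⟩).2
      rw [dif_pos hm]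
      have : (⟨↑(e.symm ⟨i, hi⟩), hm⟩ : ↥hfin.toFinset) = e.symm ⟨i, hi⟩ :=
        Subtype.ext rfl
      rw [this, Equiv.apply_symm_apply]

noncomputable def enum (hconn : G.Connected) (hacyc : G.IsAcyclic) {r : ℕ} (hr : 3 ≤ r)
    (hreg : ∀ x : V, (G.neighborSet x).ncard = r) (v y : V) : (ℕ → V) × (V → ℕ) :=
  (exists_enum hconn hacyc hr hreg v y).choose

lemma enum_spec (hconn : G.Connected) (hacyc : G.IsAcyclic) {r : ℕ} (hr : 3 ≤ r)
    (hreg : ∀ x : V, (G.neighborSet x).ncard = r) (v : V) {y : V} (hy : y ≠ v) :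
    (∀ i < r - 1, (enum hconn hacyc hr hreg v y).1 i ∈ children G v y) ∧
    (∀ x ∈ children G v y, (enum hconn hacyc hr hreg v y).2 x < r - 1 ∧
      (enum hconn hacyc hr hreg v y).1 ((enum hconn hacyc hr hreg v y).2 x) = x) ∧
    (∀ i < r - 1, (enum hconn hacyc hr hreg v y).2 ((enum hconn hacyc hr hreg v y).1 i) = i) :=
  (exists_enum hconn hacyc hr hreg v y).choose_spec hy

open Classical in
noncomputable def chMap (hconn : G.Connected) (hacyc : G.IsAcyclic) {r : ℕ} (hr : 3 ≤ r)
    (hreg : ∀ x : V, (G.neighborSet x).ncard = r) (v u w y z : V) : V → V :=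
  if y = v then Equiv.swap u w
  else fun x => if x ∈ children G v y
    then (enum hconn hacyc hr hreg v z).1 ((enum hconn hacyc hr hreg v y).2 x) else x

open Classical in
noncomputable def phi (hconn : G.Connected) (hacyc : G.IsAcyclic) {r : ℕ} (hr : 3 ≤ r)
    (hreg : ∀ x : V, (G.neighborSet x).ncard = r) (v u w : V) (x : V) : V :=
  if h : x = v then v
  else chMap hconn hacyc hr hreg v u w (parent hconn hacyc v x)
    (phi hconn hacyc hr hreg v u w (parent hconn hacyc v x)) x
termination_by G.dist v x
decreasing_by exact dist_parent_lt hconn hacyc h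

variable (hconn : G.Connected) (hacyc : G.IsAcyclic) {r : ℕ} (hr : 3 ≤ r)
  (hreg : ∀ x : V, (G.neighborSet x).ncard = r) (v u w : V)

lemma phi_root : phi hconn hacyc hr hreg v u w v = v := by
  rw [phi]
  simp

lemma phi_ne {x : V} (hx : x ≠ v) :
    phi hconn hacyc hr hreg v u w x
      = chMap hconn hacyc hr hreg v u w (parent hconn hacyc v x)
        (phi hconn hacyc hr hreg v u w (parent hconn hacyc v x)) x := by
  rw [phi, dif_neg hx]


lemma phi_spec (hu : G.Adj v u) (hw : G.Adj v w) : ∀ x : V,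
    G.dist v (phi hconn hacyc hr hreg v u w x) = G.dist v x ∧
    (x ≠ v → phi hconn hacyc hr hreg v u w x
        ∈ children G v (phi hconn hacyc hr hreg v u w (parent hconn hacyc v x))) ∧
    phi hconn hacyc hr hreg v u w (phi hconn hacyc hr hreg v u w x) = x := by
  classical
  suffices H : ∀ n x, G.dist v x = n →
      G.dist v (phi hconn hacyc hr hreg v u w x) = G.dist v x ∧
      (x ≠ v → phi hconn hacyc hr hreg v u w x
          ∈ children G v (phi hconn hacyc hr hreg v u w (parent hconn hacyc v x))) ∧
      phi hconn hacyc hr hreg v u w (phi hconn hacyc hr hreg v u w x) = x by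
    exact fun x => H _ x rfl
  intro n
  induction n using Nat.strong_induction_on with
  | _ n ih =>
    intro x hx
    by_cases hxv : x = v
    · subst hxv
      rw [phi_root]
      exact ⟨rfl, fun h => absurd rfl h, phi_root _ _ _ _ _ _ _⟩
    · set y := parent hconn hacyc v x with hydef
      have hxy : x ∈ children G v y := mem_children_parent hconn hacyc hxv
      have hyd : G.dist v y + 1 = G.dist v x := (parent_spec hconn hacyc hxv).2
      obtain ⟨dy, -, invy⟩ := ih (G.dist v y) (by omega) y rfl
      have hphix : phi hconn hacyc hr hreg v u w x
          = chMap hconn hacyc hr hreg v u w y (phi hconn hacyc hr hreg v u w y) x :=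
        phi_ne hconn hacyc hr hreg v u w hxv
      by_cases hyv : y = v
      · have hswap : phi hconn hacyc hr hreg v u w x = Equiv.swap u w x := by
          rw [hphix, hyv, chMap, if_pos rfl]
        have hx1 : x ∈ children G v v := hyv ▸ hxy
        have hmem : Equiv.swap u w x ∈ children G v v := by
          rw [children_v] at hx1 ⊢
          by_cases hxu : x = u
          · subst hxu; rw [Equiv.swap_apply_left]; exact hw
          · by_cases hxw : x = w
            · subst hxw; rw [Equiv.swap_apply_right]; exact hu
            · rwa [Equiv.swap_apply_of_ne_of_ne hxu hxw]
        have hmem' : phi hconn hacyc hr hreg v u w x ∈ children G v v := hswap ▸ hmem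
        have hpne : phi hconn hacyc hr hreg v u w x ≠ v := ne_root_of_mem_children hmem'
        refine ⟨?_, fun _ => ?_, ?_⟩
        · have h1 := hmem'.2
          have h2 := hx1.2
          omega
        · rw [hyv, phi_root]
          exact hmem'
        · have hparent : parent hconn hacyc v (phi hconn hacyc hr hreg v u w x) = v :=
            parent_of_mem_children hconn hacyc hmem'
          rw [phi_ne hconn hacyc hr hreg v u w hpne, hparent, phi_root, chMap, if_pos rfl,
            hswap, Equiv.swap_apply_self]
      · have hzne : phi hconn hacyc hr hreg v u w y ≠ v := by
          intro h
          rw [h, SimpleGraph.dist_self] at dy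
          exact hyv (hconn.dist_eq_zero_iff.mp dy.symm).symm
        set z := phi hconn hacyc hr hreg v u w y with hzdef
        have ey := enum_spec hconn hacyc hr hreg v hyv
        have ez := enum_spec hconn hacyc hr hreg v hzne
        have hphix2 : phi hconn hacyc hr hreg v u w x
            = (enum hconn hacyc hr hreg v z).1 ((enum hconn hacyc hr hreg v y).2 x) := by
          rw [hphix, chMap, if_neg hyv, if_pos hxy]
        obtain ⟨hlt, hinvx⟩ := ey.2.1 x hxy
        have hmem : phi hconn hacyc hr hreg v u w x ∈ children G v z := by
          rw [hphix2]; exact ez.1 _ hlt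
        have hpne : phi hconn hacyc hr hreg v u w x ≠ v := ne_root_of_mem_children hmem
        refine ⟨?_, fun _ => ?_, ?_⟩
        · have h1 := hmem.2
          omega
        · exact hmem
        · have hparent : parent hconn hacyc v (phi hconn hacyc hr hreg v u w x) = z :=
            parent_of_mem_children hconn hacyc hmem
          rw [phi_ne hconn hacyc hr hreg v u w hpne, hparent, invy, chMap, if_neg hzne,
            if_pos hmem, hphix2, ez.2.2 _ hlt, hinvx]


lemma phi_involutive (hu : G.Adj v u) (hw : G.Adj v w) :
    Function.Involutive (phi hconn hacyc hr hreg v u w) :=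
  fun x => (phi_spec hconn hacyc hr hreg v u w hu hw x).2.2

lemma phi_adj (hu : G.Adj v u) (hw : G.Adj v w) {a b : V} (hab : G.Adj a b) :
    G.Adj (phi hconn hacyc hr hreg v u w a) (phi hconn hacyc hr hreg v u w b) := by
  rcases adj_dist hconn hacyc (v := v) hab with h | h
  · have hb : b ∈ children G v a := ⟨hab, h⟩
    have hbv : b ≠ v := ne_root_of_mem_children hb
    have hpar : parent hconn hacyc v b = a := parent_of_mem_children hconn hacyc hb
    have := (phi_spec hconn hacyc hr hreg v u w hu hw b).2.1 hbv
    rw [hpar] at this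
    exact this.1
  · have ha : a ∈ children G v b := ⟨hab.symm, h⟩
    have hav : a ≠ v := ne_root_of_mem_children ha
    have hpar : parent hconn hacyc v a = b := parent_of_mem_children hconn hacyc ha
    have := (phi_spec hconn hacyc hr hreg v u w hu hw a).2.1 hav
    rw [hpar] at this
    exact this.1.symm

noncomputable def phiIso (hu : G.Adj v u) (hw : G.Adj v w) : G ≃g G where
  toEquiv := (phi_involutive hconn hacyc hr hreg v u w hu hw).toPerm _
  map_rel_iff' := by
    intro a b
    simp only [Function.Involutive.coe_toPerm]
    constructor
    · intro h
      have := phi_adj hconn hacyc hr hreg v u w hu hw h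
      rwa [phi_involutive hconn hacyc hr hreg v u w hu hw a,
        phi_involutive hconn hacyc hr hreg v u w hu hw b] at this
    · exact phi_adj hconn hacyc hr hreg v u w hu hw

lemma phiIso_symm_apply (hu : G.Adj v u) (hw : G.Adj v w) (x : V) :
    (phiIso hconn hacyc hr hreg v u w hu hw).symm x = phi hconn hacyc hr hreg v u w x := rfl

lemma phi_of_root : phi hconn hacyc hr hreg v u w v = v := phi_root hconn hacyc hr hreg v u w

lemma phi_of_left (hu : G.Adj v u) : phi hconn hacyc hr hreg v u w u = w := by
  classical
  have hu1 : u ∈ children G v v := by rw [children_v]; exact hu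
  have hpar : parent hconn hacyc v u = v := parent_of_mem_children hconn hacyc hu1
  rw [phi_ne hconn hacyc hr hreg v u w hu.ne', hpar, chMap, if_pos rfl, Equiv.swap_apply_left]

lemma phi_of_right (hw : G.Adj v w) : phi hconn hacyc hr hreg v u w w = u := by
  classical
  have hw1 : w ∈ children G v v := by rw [children_v]; exact hw
  have hpar : parent hconn hacyc v w = v := parent_of_mem_children hconn hacyc hw1
  rw [phi_ne hconn hacyc hr hreg v u w hw.ne', hpar, chMap, if_pos rfl, Equiv.swap_apply_right]


variable [Countable V] {p : ℕ}

lemma map_precomp (μ : Measure (V → ℝ)) [IsProbabilityMeasure μ]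
    (hμ : ∀ s : Finset V, Measure.map (fun (x : V → ℝ) (v : s) => x v) μ
        = Measure.pi (fun _ : s => volume.restrict (Set.Icc (0:ℝ) 1)))
    (e : V ≃ V) :
    Measure.map (fun (x : V → ℝ) (z : V) => x (e z)) μ = μ := by
  classical
  have hT : Measurable (fun (x : V → ℝ) (z : V) => x (e z)) :=
    measurable_pi_lambda _ fun z => measurable_pi_apply _
  haveI : IsProbabilityMeasure (Measure.map (fun (x : V → ℝ) (z : V) => x (e z)) μ) :=
    Measure.isProbabilityMeasure_map hT.aemeasurable
  have key : ∀ (s : Finset V) (S : Set ((i : s) → ℝ)), MeasurableSet S →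
      μ (cylinder s S) = Measure.pi (fun _ : s => volume.restrict (Set.Icc (0:ℝ) 1)) S := by
    intro s S hS
    rw [← hμ s, Measure.map_apply (measurable_pi_lambda _ fun i => measurable_pi_apply _) hS]
    rfl
  refine MeasureTheory.ext_of_generate_finite (measurableCylinders (fun _ : V => ℝ))
    generateFrom_measurableCylinders.symm isPiSystem_measurableCylinders ?_ ?_
  · intro t ht
    obtain ⟨s, S, hS, rfl⟩ := (mem_measurableCylinders t).mp ht
    set s' : Finset V := s.image e with hs'
    have he' : ∀ a : V, a ∈ s ↔ e a ∈ s' := by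
      intro a
      simp only [hs', Finset.mem_image]
      exact ⟨fun h => ⟨a, h, rfl⟩, fun ⟨b, hb, hba⟩ => by rwa [← e.injective hba]⟩
    set e' : {i // i ∈ s} ≃ {i // i ∈ s'} := e.subtypeEquiv he' with he'def
    set R : ((i : s') → ℝ) → ((i : s) → ℝ) := fun y i => y (e' i) with hRdef
    have hR : Measurable R := measurable_pi_lambda _ fun i => measurable_pi_apply _
    have hpre : (fun (x : V → ℝ) (z : V) => x (e z)) ⁻¹' cylinder s S
        = cylinder s' (R ⁻¹' S) := by
      ext x
      simp only [Set.mem_preimage, mem_cylinder]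
      have : (s.restrict fun z => x (e z)) = R (s'.restrict x) := rfl
      rw [this]
    have hRe : R = ⇑(MeasurableEquiv.piCongrLeft (fun _ : s => ℝ) e'.symm) := by
      rw [MeasurableEquiv.coe_piCongrLeft]
      funext y i
      conv_rhs => rw [show i = e'.symm (e' i) from (Equiv.symm_apply_apply e' i).symm]
      exact (Equiv.piCongrLeft_apply_apply (fun _ : s => ℝ) e'.symm y (e' i)).symm
      -- may need adjusting
    have hmp := measurePreserving_piCongrLeft
      (fun _ : s => (volume.restrict (Set.Icc (0:ℝ) 1))) e'.symm
    calc Measure.map (fun (x : V → ℝ) (z : V) => x (e z)) μ (cylinder s S)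
        = μ ((fun (x : V → ℝ) (z : V) => x (e z)) ⁻¹' cylinder s S) :=
          Measure.map_apply hT (hS.cylinder s)
      _ = μ (cylinder s' (R ⁻¹' S)) := by rw [hpre]
      _ = Measure.pi (fun _ : s' => volume.restrict (Set.Icc (0:ℝ) 1)) (R ⁻¹' S) :=
          key s' _ (hR hS)
      _ = ((Measure.pi (fun _ : s' => volume.restrict (Set.Icc (0:ℝ) 1))).map R) S := by
          rw [Measure.map_apply hR hS]
      _ = Measure.pi (fun _ : s => volume.restrict (Set.Icc (0:ℝ) 1)) S := by
          rw [hRe]; exact congrFun (congrArg _ hmp.map_eq) S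
      _ = μ (cylinder s S) := (key s S hS).symm
  · simp


lemma typeOf_congr {ℓ ℓ' : V → Option (Fin p)} {v : V}
    (h : ∀ b ∈ G.neighborSet v, ℓ b = ℓ' b) : typeOf G ℓ v = typeOf G ℓ' v := by
  unfold typeOf
  congr 1
  · congr 1
    ext b
    simp only [Set.mem_setOf_eq, Set.mem_sep_iff]
    exact ⟨fun ⟨h1, h2⟩ => ⟨h1, (h b h1) ▸ h2⟩, fun ⟨h1, h2⟩ => ⟨h1, (h b h1).symm ▸ h2⟩⟩
  · congr 1
    ext i
    simp only [Set.mem_setOf_eq]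
    exact ⟨fun hi b hb => (h b hb) ▸ hi b hb, fun hi b hb => (h b hb).symm ▸ hi b hb⟩

lemma typeOf_equivariant (φ : G ≃g G) (ℓ : V → Option (Fin p)) (v : V) :
    typeOf G (fun z => ℓ (φ.symm z)) v = typeOf G ℓ (φ.symm v) := by
  unfold typeOf
  congr 1
  · have himg : (fun a => φ.symm a) '' {a ∈ G.neighborSet v | ℓ (φ.symm a) = none}
        = {b ∈ G.neighborSet (φ.symm v) | ℓ b = none} := by
      ext b
      constructor
      · rintro ⟨a, ⟨haN, hl⟩, rfl⟩
        exact ⟨(φ.symm.map_adj_iff).mpr haN, hl⟩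
      · rintro ⟨hbN, hl⟩
        refine ⟨φ b, ⟨?_, ?_⟩, φ.symm_apply_apply b⟩
        · have : G.Adj (φ.symm v) (φ.symm (φ b)) := by rwa [φ.symm_apply_apply]
          exact (φ.symm.map_adj_iff).mp this
        · rwa [φ.symm_apply_apply]
    rw [← himg, Set.ncard_image_of_injective _ φ.symm.injective]
  · congr 1
    ext i
    simp only [Set.mem_setOf_eq]
    constructor
    · intro hi b hb
      have : G.Adj v (φ b) := by
        have : G.Adj (φ.symm v) (φ.symm (φ b)) := by rwa [φ.symm_apply_apply]
        exact (φ.symm.map_adj_iff).mp this |>.symm.symm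
      have := hi (φ b) this
      rwa [φ.symm_apply_apply] at this
    · intro hi b hb
      exact hi (φ.symm b) ((φ.symm.map_adj_iff).mpr hb)

variable {f : (V → ℝ) → (V → Option (Fin p))}

lemma meas_coord (hf : Measurable f) (b : V) (o : Option (Fin p)) :
    MeasurableSet {x : V → ℝ | f x b = o} := by
  have h1 : Measurable fun x => f x b := (measurable_pi_apply b).comp hf
  have h2 : {x : V → ℝ | f x b = o} = (fun x => f x b) ⁻¹' {o} := rfl
  rw [h2]
  exact h1 MeasurableSpace.measurableSet_top

lemma meas_typeOf [Countable V] (hf : Measurable f) {v : V} (hNfin : (G.neighborSet v).Finite)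
    (t : ℕ × ℕ) : MeasurableSet {x : V → ℝ | typeOf G (f x) v = t} := by
  classical
  set nb : Finset V := hNfin.toFinset with hnb
  have hext : ∀ g : ↥nb → Option (Fin p), ∀ x : V → ℝ, (∀ b : ↥nb, f x ↑b = g b) →
      typeOf G (f x) v = typeOf G (fun z => if h : z ∈ nb then g ⟨z, h⟩ else none) v := by
    intro g x hx
    refine typeOf_congr fun b hb => ?_
    have hbm : b ∈ nb := hNfin.mem_toFinset.mpr hb
    rw [dif_pos hbm]
    exact hx ⟨b, hbm⟩
  have hunion : {x : V → ℝ | typeOf G (f x) v = t}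
      = ⋃ (g : ↥nb → Option (Fin p))
          (_ : typeOf G (fun z => if h : z ∈ nb then g ⟨z, h⟩ else none) v = t),
          {x : V → ℝ | ∀ b : ↥nb, f x ↑b = g b} := by
    ext x
    simp only [Set.mem_setOf_eq, Set.mem_iUnion]
    constructor
    · intro hx
      refine ⟨fun b => f x ↑b, ?_, fun b => rfl⟩
      rw [← hext _ x (fun b => rfl)]
      exact hx
    · rintro ⟨g, hg, hx⟩
      rw [hext g x hx]
      exact hg
  rw [hunion]
  refine MeasurableSet.iUnion fun g => MeasurableSet.iUnion fun _ => ?_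
  have : {x : V → ℝ | ∀ b : ↥nb, f x ↑b = g b} = ⋂ b : ↥nb, {x : V → ℝ | f x ↑b = g b} := by
    ext x; simp [Set.mem_iInter]
  rw [this]
  exact MeasurableSet.iInter fun b => meas_coord hf _ _


end StepAux

open StepAux in
theorem step_lemma_type_probabilities
    (r p : ℕ) (hr : 3 ≤ r) (hp : 1 ≤ p)
    (V : Type) [Countable V] [Infinite V]
    (G : SimpleGraph V) (hconn : G.Connected) (hacyc : G.IsAcyclic)
    (hreg : ∀ v : V, (G.neighborSet v).ncard = r)
    (μ : Measure (V → ℝ)) [IsProbabilityMeasure μ]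
    (hμ : ∀ s : Finset V,
      Measure.map (fun (x : V → ℝ) (v : s) => x v) μ
        = Measure.pi (fun _ : s => volume.restrict (Set.Icc (0:ℝ) 1)))
    (f : (V → ℝ) → (V → Option (Fin p)))
    (hf : Measurable f)
    (heq : ∀ (φ : G ≃g G) (x : V → ℝ) (v : V),
      f (fun w => x (φ.symm w)) v = f x (φ.symm v))
    (u v : V) (huv : G.Adj u v)
    (d c : ℕ) (hd1 : 1 ≤ d) (hdr : d ≤ r) (hcp : c ≤ p) :
    μ {x | remains (f x) v ∧ typeOf G (f x) v = (d, c) ∧ remains (f x) u}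
        = ((d : ENNReal) / (r : ENNReal))
            * μ {x | remains (f x) v ∧ typeOf G (f x) v = (d, c)} ∧
    (0 < μ {x | remains (f x) u ∧ remains (f x) v} →
      μ {x | remains (f x) v ∧ typeOf G (f x) v = (d, c) ∧ remains (f x) u}
          / μ {x | remains (f x) u ∧ remains (f x) v}
        = ((d : ENNReal) * μ {x | remains (f x) v ∧ typeOf G (f x) v = (d, c)})
            / ∑ d' ∈ Finset.range (r + 1), ∑ c' ∈ Finset.range (p + 1),
                (d' : ENNReal)
                  * μ {x | remains (f x) v ∧ typeOf G (f x) v = (d', c')}) := by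
  classical
  have hu : G.Adj v u := huv.symm
  have hNfin : ∀ z : V, (G.neighborSet z).Finite := neighborSet_finite hr hreg
  -- measurability
  have mB : ∀ t : ℕ × ℕ,
      MeasurableSet {x : V → ℝ | remains (f x) v ∧ typeOf G (f x) v = t} := by
    intro t
    have hEq : {x : V → ℝ | remains (f x) v ∧ typeOf G (f x) v = t}
        = {x : V → ℝ | f x v = none} ∩ {x : V → ℝ | typeOf G (f x) v = t} := rfl
    rw [hEq]
    exact (meas_coord hf v none).inter (meas_typeOf hf (hNfin v) t)
  have mA : ∀ (b : V) (t : ℕ × ℕ),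
      MeasurableSet {x : V → ℝ | remains (f x) v ∧ typeOf G (f x) v = t ∧ remains (f x) b} := by
    intro b t
    have hEq : {x : V → ℝ | remains (f x) v ∧ typeOf G (f x) v = t ∧ remains (f x) b}
        = {x : V → ℝ | f x v = none}
          ∩ ({x : V → ℝ | typeOf G (f x) v = t} ∩ {x : V → ℝ | f x b = none}) := rfl
    rw [hEq]
    exact (meas_coord hf v none).inter
      ((meas_typeOf hf (hNfin v) t).inter (meas_coord hf b none))
  -- Step 1: all neighbours give the same measure
  have key1 : ∀ (t : ℕ × ℕ) (w : V), G.Adj v w →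
      μ {x | remains (f x) v ∧ typeOf G (f x) v = t ∧ remains (f x) w}
        = μ {x | remains (f x) v ∧ typeOf G (f x) v = t ∧ remains (f x) u} := by
    intro t w hw
    set ψ : G ≃g G := phiIso hconn hacyc hr hreg v u w hu hw with hψ
    have hψv : ψ.symm v = v := phi_of_root hconn hacyc hr hreg v u w
    have hψw : ψ.symm w = u := phi_of_right hconn hacyc hr hreg v u w hw
    set e : V ≃ V := ψ.toEquiv.symm with he
    have hT : Measurable (fun (x : V → ℝ) (z : V) => x (e z)) :=
      measurable_pi_lambda _ fun z => measurable_pi_apply _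
    have hinv := map_precomp μ hμ e
    have hpre : (fun (x : V → ℝ) (z : V) => x (e z))
          ⁻¹' {x | remains (f x) v ∧ typeOf G (f x) v = t ∧ remains (f x) w}
        = {x | remains (f x) v ∧ typeOf G (f x) v = t ∧ remains (f x) u} := by
      ext x
      have hfx : f (fun z => x (e z)) = fun z => f x (ψ.symm z) := funext (heq ψ x)
      simp only [Set.mem_preimage, Set.mem_setOf_eq, remains, hfx]
      rw [typeOf_equivariant ψ (f x) v, hψv, hψw]
    calc μ {x | remains (f x) v ∧ typeOf G (f x) v = t ∧ remains (f x) w}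
        = (μ.map (fun (x : V → ℝ) (z : V) => x (e z)))
            {x | remains (f x) v ∧ typeOf G (f x) v = t ∧ remains (f x) w} := by
          rw [hinv]
      _ = μ ((fun (x : V → ℝ) (z : V) => x (e z))
            ⁻¹' {x | remains (f x) v ∧ typeOf G (f x) v = t ∧ remains (f x) w}) :=
          Measure.map_apply hT (mA w t)
      _ = μ {x | remains (f x) v ∧ typeOf G (f x) v = t ∧ remains (f x) u} := by rw [hpre]
  -- the neighbourhood as a finset
  set nb : Finset V := (hNfin v).toFinset with hnb
  have hcard : nb.card = r := by
    rw [hnb, ← Set.ncard_eq_toFinset_card _ (hNfin v)]; exact hreg v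
  have hmem_nb : ∀ w : V, w ∈ nb ↔ G.Adj v w := by
    intro w; rw [hnb, Set.Finite.mem_toFinset, SimpleGraph.mem_neighborSet]
  -- Step 2: summing over neighbours
  have key2 : ∀ t : ℕ × ℕ,
      (r : ENNReal) * μ {x | remains (f x) v ∧ typeOf G (f x) v = t ∧ remains (f x) u}
        = (t.1 : ENNReal) * μ {x | remains (f x) v ∧ typeOf G (f x) v = t} := by
    intro t
    have hsum : ∑ w ∈ nb, μ {x | remains (f x) v ∧ typeOf G (f x) v = t ∧ remains (f x) w}
        = (t.1 : ENNReal) * μ {x | remains (f x) v ∧ typeOf G (f x) v = t} := by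
      have h1 : ∀ w ∈ nb, μ {x | remains (f x) v ∧ typeOf G (f x) v = t ∧ remains (f x) w}
          = ∫⁻ x, ({x : V → ℝ | remains (f x) v ∧ typeOf G (f x) v = t ∧ remains (f x) w}).indicator
              (fun _ => (1 : ENNReal)) x ∂μ :=
        fun w _ => (lintegral_indicator_one (mA w t)).symm
      rw [Finset.sum_congr rfl h1,
        ← lintegral_finset_sum _ (fun w _ => measurable_const.indicator (mA w t))]
      have h2 : ∀ x : V → ℝ,
          (∑ w ∈ nb, ({x : V → ℝ | remains (f x) v ∧ typeOf G (f x) v = t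
              ∧ remains (f x) w}).indicator (fun _ => (1 : ENNReal)) x)
          = ({x : V → ℝ | remains (f x) v ∧ typeOf G (f x) v = t}).indicator
              (fun _ => (t.1 : ENNReal)) x := by
        intro x
        by_cases hxB : x ∈ {x : V → ℝ | remains (f x) v ∧ typeOf G (f x) v = t}
        · rw [Set.indicator_of_mem hxB]
          have h3 : ∀ w : V, ({x : V → ℝ | remains (f x) v ∧ typeOf G (f x) v = t
              ∧ remains (f x) w}).indicator (fun _ => (1 : ENNReal)) x
              = if f x w = none then 1 else 0 := by
            intro w
            rw [Set.indicator_apply]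
            exact if_congr ⟨fun h => h.2.2, fun h => ⟨hxB.1, hxB.2, h⟩⟩ rfl rfl
          rw [Finset.sum_congr rfl (fun w _ => h3 w), Finset.sum_boole]
          have hset : {a ∈ G.neighborSet v | f x a = none}
              = ↑(nb.filter fun w => f x w = none) := by
            ext a
            simp only [Set.mem_setOf_eq, Set.mem_sep_iff, Finset.coe_filter, hmem_nb a,
              SimpleGraph.mem_neighborSet]
          have hfst : ({a ∈ G.neighborSet v | f x a = none}).ncard = t.1 :=
            congrArg Prod.fst hxB.2
          rw [hset, Set.ncard_coe_finset] at hfst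
          exact_mod_cast hfst
        · rw [Set.indicator_of_notMem hxB]
          refine Finset.sum_eq_zero fun w _ => ?_
          exact Set.indicator_of_notMem (fun h => hxB ⟨h.1, h.2.1⟩) _
      rw [lintegral_congr h2, lintegral_indicator_const (mB t)]
    have hconst : ∑ w ∈ nb, μ {x | remains (f x) v ∧ typeOf G (f x) v = t ∧ remains (f x) w}
        = (r : ENNReal) * μ {x | remains (f x) v ∧ typeOf G (f x) v = t ∧ remains (f x) u} := by
      rw [Finset.sum_congr rfl (fun w hw => key1 t w ((hmem_nb w).mp hw)),
        Finset.sum_const, hcard, nsmul_eq_mul]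
    rw [← hconst, hsum]
  have hr0 : (r : ENNReal) ≠ 0 := by
    simp only [ne_eq, Nat.cast_eq_zero]; omega
  have hrt : (r : ENNReal) ≠ ⊤ := ENNReal.natCast_ne_top r
  have key3 : ∀ t : ℕ × ℕ,
      μ {x | remains (f x) v ∧ typeOf G (f x) v = t ∧ remains (f x) u}
        = ((t.1 : ENNReal) / (r : ENNReal))
            * μ {x | remains (f x) v ∧ typeOf G (f x) v = t} := by
    intro t
    calc μ {x | remains (f x) v ∧ typeOf G (f x) v = t ∧ remains (f x) u}
        = ((r : ENNReal)⁻¹ * (r : ENNReal))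
            * μ {x | remains (f x) v ∧ typeOf G (f x) v = t ∧ remains (f x) u} := by
          rw [ENNReal.inv_mul_cancel hr0 hrt, one_mul]
      _ = (r : ENNReal)⁻¹
            * ((r : ENNReal) * μ {x | remains (f x) v ∧ typeOf G (f x) v = t ∧ remains (f x) u}) := by
          rw [mul_assoc]
      _ = (r : ENNReal)⁻¹
            * ((t.1 : ENNReal) * μ {x | remains (f x) v ∧ typeOf G (f x) v = t}) := by
          rw [key2 t]
      _ = ((t.1 : ENNReal) / (r : ENNReal))
            * μ {x | remains (f x) v ∧ typeOf G (f x) v = t} := by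
          rw [ENNReal.div_eq_inv_mul, mul_assoc]
  refine ⟨key3 (d, c), ?_⟩
  intro _
  -- covering the event that both remain
  have hcover : {x : V → ℝ | remains (f x) u ∧ remains (f x) v}
      = ⋃ t ∈ Finset.range (r + 1) ×ˢ Finset.range (p + 1),
          {x : V → ℝ | remains (f x) v ∧ typeOf G (f x) v = t ∧ remains (f x) u} := by
    ext x
    simp only [Set.mem_setOf_eq, Set.mem_iUnion, exists_prop]
    constructor
    · rintro ⟨hru, hrv⟩
      refine ⟨typeOf G (f x) v, ?_, hrv, rfl, hru⟩
      rw [Finset.mem_product, Finset.mem_range, Finset.mem_range, Nat.lt_succ_iff,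
        Nat.lt_succ_iff]
      constructor
      · have h1 : (typeOf G (f x) v).1 ≤ (G.neighborSet v).ncard :=
          Set.ncard_le_ncard (fun a ha => ha.1) (hNfin v)
        rw [hreg v] at h1
        exact h1
      · have h2 : (typeOf G (f x) v).2 ≤ (Set.univ : Set (Fin p)).ncard :=
          Set.ncard_le_ncard (fun a _ => Set.mem_univ a) (Set.finite_univ)
        rwa [Set.ncard_univ, Nat.card_eq_fintype_card, Fintype.card_fin] at h2
    · rintro ⟨t, -, hrv, -, hru⟩
      exact ⟨hru, hrv⟩
  have hdisj : (↑(Finset.range (r + 1) ×ˢ Finset.range (p + 1)) : Set (ℕ × ℕ)).PairwiseDisjoint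
      (fun t => {x : V → ℝ | remains (f x) v ∧ typeOf G (f x) v = t ∧ remains (f x) u}) := by
    intro t1 _ t2 _ hne
    refine Set.disjoint_left.mpr fun x hx1 hx2 => hne ?_
    rw [← hx1.2.1, hx2.2.1]
  have hS2 : μ {x : V → ℝ | remains (f x) u ∧ remains (f x) v}
      = ∑ t ∈ Finset.range (r + 1) ×ˢ Finset.range (p + 1),
          μ {x : V → ℝ | remains (f x) v ∧ typeOf G (f x) v = t ∧ remains (f x) u} := by
    rw [hcover]
    exact measure_biUnion_finset hdisj (fun t _ => mA u t)
  have hS2' : μ {x : V → ℝ | remains (f x) u ∧ remains (f x) v}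
      = (∑ t ∈ Finset.range (r + 1) ×ˢ Finset.range (p + 1),
          (t.1 : ENNReal) * μ {x : V → ℝ | remains (f x) v ∧ typeOf G (f x) v = t})
        * (r : ENNReal)⁻¹ := by
    rw [hS2]
    have hterm : ∀ t ∈ Finset.range (r + 1) ×ˢ Finset.range (p + 1),
        μ {x : V → ℝ | remains (f x) v ∧ typeOf G (f x) v = t ∧ remains (f x) u}
          = ((t.1 : ENNReal) * μ {x : V → ℝ | remains (f x) v ∧ typeOf G (f x) v = t})
            * (r : ENNReal)⁻¹ := by
      intro t _
      rw [key3 t, ENNReal.div_eq_inv_mul]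
      ring
    rw [Finset.sum_congr rfl hterm, ← Finset.sum_mul]
  have hnum : μ {x | remains (f x) v ∧ typeOf G (f x) v = (d, c) ∧ remains (f x) u}
      = ((d : ENNReal) * μ {x | remains (f x) v ∧ typeOf G (f x) v = (d, c)})
        * (r : ENNReal)⁻¹ := by
    rw [key3 (d, c), ENNReal.div_eq_inv_mul]
    ring
  rw [hnum, hS2', ENNReal.mul_div_mul_right _ _ (ENNReal.inv_ne_zero.mpr hrt)
    (ENNReal.inv_ne_top.mpr hr0), Finset.sum_product]
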